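/- Let n, k, D be integers with n ≥ 1, k ≥ 1, and D > 2*(n−1)*k, and let l₁ : ℤ. Define the finite set P = { l₁ + j*D + u*k : 0 ≤ j ≤ n−1, 0 ≤ u ≤ n−1 } ⊆ ℤ, and for s : ℤ define the autocorrelation C(s) = |{ x ∈ P : x + s ∈ P }|. Then: (i) |P| = n²; (ii) for all integers q, m with |q| ≤ n−1 and |m| ≤ n−1, C(q*D + m*k) = (n − |q|) * (n − |m|); (iii) for every integer s that is not of the form q*D + m*k with |q| ≤ n−1 and |m| ≤ n−1, C(s) = 0. -/

import Mathlib

/-- The union of `n` arithmetic progressions of length `n` with common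
difference `k`, whose starting points `l₁, l₁ + D, …, l₁ + (n-1)D` are
equally spaced with spacing `D`. -/
noncomputable def progPattern (n k D l₁ : ℤ) : Finset ℤ :=
  Finset.image (fun p : ℤ × ℤ => l₁ + p.1 * D + p.2 * k)
    ((Finset.Icc 0 (n - 1)) ×ˢ (Finset.Icc 0 (n - 1)))

/-- The autocorrelation `C(s) = |P ∩ (P - s)| = |{x ∈ P : x + s ∈ P}|`. -/
def autocorr (P : Finset ℤ) (s : ℤ) : ℕ :=
  (P.filter (fun x => x + s ∈ P)).card

theorem autocorrelation_of_equally_spaced_progressions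
    (n k D l₁ : ℤ) (hn : 1 ≤ n) (hk : 1 ≤ k) (hD : 2 * (n - 1) * k < D) :
    ((progPattern n k D l₁).card : ℤ) = n ^ 2 ∧
    (∀ q m : ℤ, |q| ≤ n - 1 → |m| ≤ n - 1 →
      (autocorr (progPattern n k D l₁) (q * D + m * k) : ℤ) =
        (n - |q|) * (n - |m|)) ∧
    (∀ s : ℤ, (¬ ∃ q m : ℤ, |q| ≤ n - 1 ∧ |m| ≤ n - 1 ∧ s = q * D + m * k) →
      autocorr (progPattern n k D l₁) s = 0) := by
  have hD0 : 0 < D := lt_of_le_of_lt (by nlinarith) hD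
  -- uniqueness of representation
  have key : ∀ a b c d : ℤ, |b - d| ≤ 2 * (n - 1) → a * D + b * k = c * D + d * k →
      a = c ∧ b = d := by
    intro a b c d hbd heq
    have h1 : (a - c) * D = (d - b) * k := by linear_combination heq
    have hac : a = c := by
      by_contra h
      have h2 : 1 ≤ |a - c| := Int.one_le_abs (sub_ne_zero.mpr h)
      have h3 : |(a - c) * D| = |(d - b) * k| := by rw [h1]
      rw [abs_mul, abs_mul, abs_of_pos hD0, abs_of_pos (by omega : (0:ℤ) < k)] at h3
      have h4 : |d - b| ≤ 2 * (n - 1) := by rw [abs_sub_comm]; exact hbd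
      nlinarith [abs_nonneg (a - c), abs_nonneg (d - b)]
    refine ⟨hac, ?_⟩
    have h5 : (d - b) * k = 0 := by rw [← h1, hac]; ring
    rcases mul_eq_zero.mp h5 with h | h
    · omega
    · omega
  have memP : ∀ x : ℤ, x ∈ progPattern n k D l₁ ↔
      ∃ j u : ℤ, 0 ≤ j ∧ j ≤ n - 1 ∧ 0 ≤ u ∧ u ≤ n - 1 ∧ x = l₁ + j * D + u * k := by
    intro x
    simp only [progPattern, Finset.mem_image, Finset.mem_product, Finset.mem_Icc, Prod.exists]
    constructor
    · rintro ⟨j, u, ⟨⟨h1, h2⟩, h3, h4⟩, h5⟩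
      exact ⟨j, u, h1, h2, h3, h4, h5.symm⟩
    · rintro ⟨j, u, h1, h2, h3, h4, h5⟩
      exact ⟨j, u, ⟨⟨h1, h2⟩, h3, h4⟩, h5.symm⟩
  have hinj : Set.InjOn (fun p : ℤ × ℤ => l₁ + p.1 * D + p.2 * k)
      (((Finset.Icc (0:ℤ) (n-1)) ×ˢ (Finset.Icc (0:ℤ) (n-1)) : Finset (ℤ × ℤ)) : Set (ℤ × ℤ)) := by
    intro p hp q hq heq
    simp only [Finset.coe_product, Set.mem_prod, Finset.mem_coe, Finset.mem_Icc] at hp hq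
    have heq' : p.1 * D + p.2 * k = q.1 * D + q.2 * k := by
      have h : l₁ + p.1 * D + p.2 * k = l₁ + q.1 * D + q.2 * k := heq
      linarith
    have hb : |p.2 - q.2| ≤ 2 * (n - 1) := by
      rw [abs_le]; omega
    obtain ⟨h1, h2⟩ := key _ _ _ _ hb heq'
    exact Prod.ext h1 h2
  refine ⟨?_, ?_, ?_⟩
  · -- cardinality
    rw [progPattern, Finset.card_image_of_injOn hinj, Finset.card_product, Int.card_Icc,
      show n - 1 + 1 - 0 = n by ring]
    push_cast [Int.toNat_of_nonneg (by omega : (0:ℤ) ≤ n)]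
    ring
  · -- autocorrelation at q*D + m*k
    intro q m hq hm
    have hq' := abs_le.mp hq
    have hm' := abs_le.mp hm
    have hfilter : (progPattern n k D l₁).filter
        (fun x => x + (q * D + m * k) ∈ progPattern n k D l₁)
        = Finset.image (fun p : ℤ × ℤ => l₁ + p.1 * D + p.2 * k)
            ((Finset.Icc (max 0 (-q)) (min (n-1) (n-1-q))) ×ˢ
             (Finset.Icc (max 0 (-m)) (min (n-1) (n-1-m)))) := by
      ext x
      simp only [Finset.mem_filter, Finset.mem_image, Finset.mem_product, Finset.mem_Icc,
        Prod.exists, memP]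
      constructor
      · rintro ⟨⟨j, u, h1, h2, h3, h4, h5⟩, j', u', h1', h2', h3', h4', h5'⟩
        have heq : j' * D + u' * k = (j + q) * D + (u + m) * k := by
          have : l₁ + j' * D + u' * k = l₁ + (j + q) * D + (u + m) * k := by
            rw [← h5']; rw [h5]; ring
          linarith [this]
        have hb : |u' - (u + m)| ≤ 2 * (n - 1) := by rw [abs_le]; omega
        obtain ⟨e1, e2⟩ := key _ _ _ _ hb heq
        refine ⟨j, u, ⟨⟨?_, ?_⟩, ?_, ?_⟩, h5.symm⟩ <;> omega
      · rintro ⟨j, u, ⟨⟨h1, h2⟩, h3, h4⟩, h5⟩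
        refine ⟨⟨j, u, by omega, by omega, by omega, by omega, h5.symm⟩,
          j + q, u + m, by omega, by omega, by omega, by omega, ?_⟩
        rw [← h5]; ring
    have hsub : (((Finset.Icc (max 0 (-q)) (min (n-1) (n-1-q))) ×ˢ
        (Finset.Icc (max 0 (-m)) (min (n-1) (n-1-m))) : Finset (ℤ × ℤ)) : Set (ℤ × ℤ)) ⊆
        (((Finset.Icc (0:ℤ) (n-1)) ×ˢ (Finset.Icc (0:ℤ) (n-1)) : Finset (ℤ × ℤ)) : Set (ℤ × ℤ)) := by
      intro p hp
      simp only [Finset.coe_product, Set.mem_prod, Finset.mem_coe, Finset.mem_Icc] at hp ⊢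
      omega
    rw [autocorr, hfilter, Finset.card_image_of_injOn (hinj.mono hsub),
      Finset.card_product, Int.card_Icc, Int.card_Icc]
    have e1 : min (n-1) (n-1-q) + 1 - max 0 (-q) = n - |q| := by
      rcases le_or_gt 0 q with h | h
      · rw [abs_of_nonneg h]; omega
      · rw [abs_of_neg h]; omega
    have e2 : min (n-1) (n-1-m) + 1 - max 0 (-m) = n - |m| := by
      rcases le_or_gt 0 m with h | h
      · rw [abs_of_nonneg h]; omega
      · rw [abs_of_neg h]; omega
    rw [e1, e2]
    have g1 : (0:ℤ) ≤ n - |q| := by linarith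
    have g2 : (0:ℤ) ≤ n - |m| := by linarith
    push_cast [Int.toNat_of_nonneg g1, Int.toNat_of_nonneg g2]
    ring
  · -- vanishing
    intro s hs
    by_contra h
    rw [autocorr] at h
    obtain ⟨x, hx⟩ := Finset.card_ne_zero.mp h
    rw [Finset.mem_filter] at hx
    obtain ⟨hx1, hx2⟩ := hx
    obtain ⟨j, u, h1, h2, h3, h4, h5⟩ := (memP x).mp hx1
    obtain ⟨j', u', h1', h2', h3', h4', h5'⟩ := (memP _).mp hx2
    refine hs ⟨j' - j, u' - u, ?_, ?_, ?_⟩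
    · rw [abs_le]; omega
    · rw [abs_le]; omega
    · have : l₁ + j * D + u * k + s = l₁ + j' * D + u' * k := by rw [← h5, ← h5']
      linarith [this]
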